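/- arXiv:2006.13984 — 3 statements merged into one kernel-verified Lean document; each statement's English description precedes it below -/
import Mathlib

section
/- If X is a binomial random variable with parameters n and p, and k ≥ np, then P(X ≥ k) ≤ exp(-np·H(k/(np))), where H(x) = 1 - x + x·log(x) for x > 0 and H(0) = 1. -/
open Finset Real

/-- `H(x) = 1 - x + x log x` (note `Real.log 0 = 0`, so `H 0 = 1` automatically). -/
noncomputable def H (x : ℝ) : ℝ := 1 - x + x * Real.log x

lemma chernoff_aux (n : ℕ) (p : ℝ) (hp0 : 0 ≤ p) (hp1 : p ≤ 1)
    (k t : ℝ) (ht : 0 ≤ t) :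
    (∑ i ∈ Finset.range (n + 1),
        if k ≤ (i : ℝ) then (n.choose i : ℝ) * p ^ i * (1 - p) ^ (n - i) else 0)
      ≤ Real.exp ((n : ℝ) * p * (Real.exp t - 1) - t * k) := by
  have hq : (0:ℝ) ≤ 1 - p := by linarith
  have h1 : (∑ i ∈ Finset.range (n + 1),
      if k ≤ (i : ℝ) then (n.choose i : ℝ) * p ^ i * (1 - p) ^ (n - i) else 0)
      ≤ ∑ i ∈ Finset.range (n + 1),
        (n.choose i : ℝ) * p ^ i * (1 - p) ^ (n - i) * Real.exp (t * ((i : ℝ) - k)) := by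
    apply Finset.sum_le_sum
    intro i _
    have hterm : 0 ≤ (n.choose i : ℝ) * p ^ i * (1 - p) ^ (n - i) :=
      mul_nonneg (mul_nonneg (Nat.cast_nonneg _) (pow_nonneg hp0 _)) (pow_nonneg hq _)
    split_ifs with h
    · nth_rewrite 1 [← mul_one ((n.choose i : ℝ) * p ^ i * (1 - p) ^ (n - i))]
      apply mul_le_mul_of_nonneg_left _ hterm
      have : (0:ℝ) ≤ t * ((i : ℝ) - k) := mul_nonneg ht (by linarith)
      calc (1:ℝ) = Real.exp 0 := (Real.exp_zero).symm
        _ ≤ Real.exp (t * ((i : ℝ) - k)) := Real.exp_le_exp.mpr this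
    · positivity
  have h2 : ∑ i ∈ Finset.range (n + 1),
        (n.choose i : ℝ) * p ^ i * (1 - p) ^ (n - i) * Real.exp (t * ((i : ℝ) - k))
      = Real.exp (-(t * k)) * (p * Real.exp t + (1 - p)) ^ n := by
    rw [add_pow, Finset.mul_sum]
    apply Finset.sum_congr rfl
    intro i _
    rw [mul_pow, ← Real.exp_nat_mul, mul_sub, Real.exp_sub, Real.exp_neg, mul_comm t (i:ℝ)]
    ring
  have hx : (0:ℝ) ≤ p * (Real.exp t - 1) := by
    have : (1:ℝ) ≤ Real.exp t := by
      calc (1:ℝ) = Real.exp 0 := (Real.exp_zero).symm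
        _ ≤ Real.exp t := Real.exp_le_exp.mpr ht
    exact mul_nonneg hp0 (by linarith)
  have h3 : (p * Real.exp t + (1 - p)) ^ n ≤ Real.exp ((n : ℝ) * (p * (Real.exp t - 1))) := by
    have hbase : p * Real.exp t + (1 - p) = p * (Real.exp t - 1) + 1 := by ring
    have hle : p * (Real.exp t - 1) + 1 ≤ Real.exp (p * (Real.exp t - 1)) :=
      Real.add_one_le_exp _
    calc (p * Real.exp t + (1 - p)) ^ n
        ≤ (Real.exp (p * (Real.exp t - 1))) ^ n := by
          apply pow_le_pow_left₀ (by rw [hbase]; linarith) (by rw [hbase]; exact hle)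
      _ = Real.exp ((n : ℝ) * (p * (Real.exp t - 1))) := (Real.exp_nat_mul _ _).symm
  calc (∑ i ∈ Finset.range (n + 1),
        if k ≤ (i : ℝ) then (n.choose i : ℝ) * p ^ i * (1 - p) ^ (n - i) else 0)
      ≤ ∑ i ∈ Finset.range (n + 1),
        (n.choose i : ℝ) * p ^ i * (1 - p) ^ (n - i) * Real.exp (t * ((i : ℝ) - k)) := h1
    _ = Real.exp (-(t * k)) * (p * Real.exp t + (1 - p)) ^ n := h2
    _ ≤ Real.exp (-(t * k)) * Real.exp ((n : ℝ) * (p * (Real.exp t - 1))) :=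
        mul_le_mul_of_nonneg_left h3 (Real.exp_nonneg _)
    _ = Real.exp ((n : ℝ) * p * (Real.exp t - 1) - t * k) := by
        rw [← Real.exp_add]; ring_nf

/-- Chernoff upper-tail bound for a binomial random variable `X ~ Bi(n, p)`:
if `k ≥ np` then `P(X ≥ k) ≤ exp(-np · H(k/(np)))`. -/
theorem binomial_upper_tail_chernoff (n : ℕ) (p : ℝ) (hp0 : 0 ≤ p) (hp1 : p ≤ 1)
    (k : ℝ) (hk : (n : ℝ) * p ≤ k) :
    (∑ i ∈ Finset.range (n + 1),
        if k ≤ (i : ℝ) then (n.choose i : ℝ) * p ^ i * (1 - p) ^ (n - i) else 0)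
      ≤ Real.exp (-((n : ℝ) * p) * H (k / ((n : ℝ) * p))) := by
  set μ : ℝ := (n : ℝ) * p with hμdef
  have hμ0 : 0 ≤ μ := mul_nonneg (Nat.cast_nonneg _) hp0
  rcases eq_or_lt_of_le hμ0 with hμ | hμ
  · -- μ = 0
    have := chernoff_aux n p hp0 hp1 k 0 le_rfl
    calc _ ≤ Real.exp (μ * (Real.exp 0 - 1) - 0 * k) := this
      _ = Real.exp (-μ * H (k / μ)) := by rw [← hμ]; simp
  · -- μ > 0
    have hk0 : 0 < k := lt_of_lt_of_le hμ hk
    have hr : (1:ℝ) ≤ k / μ := (one_le_div hμ).mpr hk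
    set t : ℝ := Real.log (k / μ) with htdef
    have ht : 0 ≤ t := Real.log_nonneg hr
    have hexpt : Real.exp t = k / μ := Real.exp_log (by positivity)
    have := chernoff_aux n p hp0 hp1 k t ht
    calc _ ≤ Real.exp (μ * (Real.exp t - 1) - t * k) := this
      _ = Real.exp (-μ * H (k / μ)) := by
          congr 1
          rw [hexpt, H]
          field_simp
          ring
end

section
/- If X is a binomial random variable with parameters n and p, and k ≤ np, then P(X ≤ k) ≤ exp(-np·H(k/(np))), where H(x) = 1 - x + x·log(x) for x > 0 and H(0) = 1. -/
open Finset Real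

/-- Chernoff lower-tail bound for a binomial random variable `X ~ Bi(n, p)`:
if `k ≤ np` then `P(X ≤ k) ≤ exp(-np · H(k/(np)))`. -/
theorem binomial_lower_tail_chernoff (n : ℕ) (p : ℝ) (hp0 : 0 ≤ p) (hp1 : p ≤ 1)
    (k : ℝ) (hk : k ≤ (n : ℝ) * p) :
    (∑ i ∈ Finset.range (n + 1),
        if (i : ℝ) ≤ k then (n.choose i : ℝ) * p ^ i * (1 - p) ^ (n - i) else 0)
      ≤ Real.exp (-((n : ℝ) * p) * H (k / ((n : ℝ) * p))) := by
  set μ : ℝ := (n : ℝ) * p with hμdef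
  have hμ0 : 0 ≤ μ := mul_nonneg (Nat.cast_nonneg n) hp0
  have h1p : (0:ℝ) ≤ 1 - p := by linarith
  have hterm : ∀ i : ℕ, 0 ≤ (n.choose i : ℝ) * p ^ i * (1 - p) ^ (n - i) := by
    intro i
    exact mul_nonneg (mul_nonneg (Nat.cast_nonneg _) (pow_nonneg hp0 _)) (pow_nonneg h1p _)
  rcases lt_or_ge k 0 with hk0 | hk0
  · -- k < 0 : LHS = 0
    have hz : (∑ i ∈ Finset.range (n + 1),
        if (i : ℝ) ≤ k then (n.choose i : ℝ) * p ^ i * (1 - p) ^ (n - i) else 0) = 0 := by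
      apply Finset.sum_eq_zero
      intro i _
      rw [if_neg]
      push_neg
      exact lt_of_lt_of_le hk0 (Nat.cast_nonneg i)
    rw [hz]
    exact (Real.exp_pos _).le
  rcases eq_or_lt_of_le hμ0 with hμz | hμpos
  · -- μ = 0, hence k = 0
    have hkz : k = 0 := le_antisymm (hk.trans_eq hμz.symm) hk0
    rw [← hμz, neg_zero, zero_mul, Real.exp_zero]
    calc (∑ i ∈ Finset.range (n + 1),
        if (i : ℝ) ≤ k then (n.choose i : ℝ) * p ^ i * (1 - p) ^ (n - i) else 0)
        ≤ ∑ i ∈ Finset.range (n + 1), (n.choose i : ℝ) * p ^ i * (1 - p) ^ (n - i) := by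
          apply Finset.sum_le_sum
          intro i _
          split_ifs with hi
          · exact le_refl _
          · exact hterm i
      _ = (p + (1 - p)) ^ n := by
          rw [add_pow]
          apply Finset.sum_congr rfl
          intro i _
          ring
      _ = 1 := by norm_num
  · rcases eq_or_lt_of_le hk0 with hkz | hkpos
    · -- k = 0, μ > 0
      subst hkz
      have hz : (∑ i ∈ Finset.range (n + 1),
          if (i : ℝ) ≤ (0:ℝ) then (n.choose i : ℝ) * p ^ i * (1 - p) ^ (n - i) else 0)
          = (1 - p) ^ n := by
        rw [Finset.sum_eq_single 0]
        · simp
        · intro i _ hne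
          rw [if_neg]
          push_neg
          exact_mod_cast Nat.pos_of_ne_zero hne
        · intro h
          exact absurd (Finset.mem_range.2 (Nat.succ_pos n)) h
      rw [hz]
      have hH0 : H ((0:ℝ) / μ) = 1 := by simp [H]
      rw [hH0, mul_one]
      have h2 : -μ = (n:ℝ) * (-p) := by rw [hμdef]; ring
      rw [h2, Real.exp_nat_mul]
      exact pow_le_pow_left₀ h1p (by linarith [Real.add_one_le_exp (-p)]) n
    · -- 0 < k ≤ μ, 0 < μ
      set c : ℝ := k / μ with hcdef
      have hc0 : 0 < c := div_pos hkpos hμpos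
      have hc1 : c ≤ 1 := (div_le_one hμpos).2 hk
      have hμc : μ * c = k := by
        rw [hcdef]
        field_simp
      have hck : (0:ℝ) ≤ c ^ (-k) := Real.rpow_nonneg hc0.le _
      have step1 : (∑ i ∈ Finset.range (n + 1),
          if (i : ℝ) ≤ k then (n.choose i : ℝ) * p ^ i * (1 - p) ^ (n - i) else 0)
          ≤ ∑ i ∈ Finset.range (n + 1),
            c ^ (-k) * ((n.choose i : ℝ) * (p * c) ^ i * (1 - p) ^ (n - i)) := by
        apply Finset.sum_le_sum
        intro i _
        have hb : (0:ℝ) ≤ (n.choose i : ℝ) * p ^ i * (1 - p) ^ (n - i) := hterm i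
        have hkey : c ^ (-k) * ((n.choose i : ℝ) * (p * c) ^ i * (1 - p) ^ (n - i))
            = c ^ ((i:ℝ) - k) * ((n.choose i : ℝ) * p ^ i * (1 - p) ^ (n - i)) := by
          rw [mul_pow, ← Real.rpow_natCast c i]
          rw [show (i:ℝ) - k = -k + (i:ℝ) by ring, Real.rpow_add hc0]
          ring
        rw [hkey]
        split_ifs with hi
        · apply le_mul_of_one_le_left hb
          exact Real.one_le_rpow_of_pos_of_le_one_of_nonpos hc0 hc1 (by linarith)
        · exact mul_nonneg (Real.rpow_nonneg hc0.le _) hb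
      have step2 : (∑ i ∈ Finset.range (n + 1),
          c ^ (-k) * ((n.choose i : ℝ) * (p * c) ^ i * (1 - p) ^ (n - i)))
          = c ^ (-k) * (p * c + (1 - p)) ^ n := by
        rw [← Finset.mul_sum, add_pow]
        congr 1
        apply Finset.sum_congr rfl
        intro i _
        ring
      have hbase : (0:ℝ) ≤ p * c + (1 - p) := by
        have := mul_nonneg hp0 hc0.le
        linarith
      have step3 : (p * c + (1 - p)) ^ n ≤ Real.exp (μ * (c - 1)) := by
        have h1 : p * c + (1 - p) ≤ Real.exp (p * (c - 1)) := by
          have := Real.add_one_le_exp (p * (c - 1))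
          linarith
        calc (p * c + (1 - p)) ^ n ≤ (Real.exp (p * (c - 1))) ^ n :=
              pow_le_pow_left₀ hbase h1 n
          _ = Real.exp ((n:ℝ) * (p * (c - 1))) := (Real.exp_nat_mul _ n).symm
          _ = Real.exp (μ * (c - 1)) := by rw [hμdef]; ring_nf
      have step4 : c ^ (-k) * Real.exp (μ * (c - 1)) = Real.exp (-μ * H c) := by
        rw [Real.rpow_def_of_pos hc0, ← Real.exp_add]
        congr 1
        have : -μ * H c = -μ * (1 - c + c * Real.log c) := by rw [H]
        rw [this, ← hμc]
        ring
      have hHc : H (k / μ) = H c := by rw [hcdef]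
      rw [hHc, ← step4]
      calc (∑ i ∈ Finset.range (n + 1),
          if (i : ℝ) ≤ k then (n.choose i : ℝ) * p ^ i * (1 - p) ^ (n - i) else 0)
          ≤ c ^ (-k) * (p * c + (1 - p)) ^ n := by rw [← step2]; exact step1
        _ ≤ c ^ (-k) * Real.exp (μ * (c - 1)) :=
            mul_le_mul_of_nonneg_left step3 hck
end

section
/- There exists a constant C > 0 depending only on Ω and d such that if the radii r_n satisfy n·q_min·r_n^d ≥ C·log n for all n, then almost surely there exists n₀ ∈ ℕ such that for all n ≥ n₀, Ω is covered by the union of balls B(x, r_n) over x ∈ X_n. -/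
open MeasureTheory ProbabilityTheory Filter Metric ENNReal


lemma exists_net_rc (d : ℕ) (Ω : Set (EuclideanSpace ℝ (Fin d)))
    (hΩm : MeasurableSet Ω) (hfin : volume Ω ≠ ⊤)
    (c₀ ρ : ℝ) (hc₀ : 0 < c₀) (hρ : 0 < ρ)
    (hvol : ∀ x ∈ Ω, ENNReal.ofReal (c₀ * (ρ / 4) ^ d) ≤ volume (ball x (ρ / 4) ∩ Ω)) :
    ∃ T : Finset (EuclideanSpace ℝ (Fin d)), ↑T ⊆ Ω ∧
      (∀ x ∈ Ω, ∃ y ∈ T, dist x y < ρ / 2) ∧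
      (T.card : ℝ) * (c₀ * (ρ / 4) ^ d) ≤ (volume Ω).toReal := by
  classical
  set adm : Finset (EuclideanSpace ℝ (Fin d)) → Prop :=
    fun t => ↑t ⊆ Ω ∧ (↑t : Set (EuclideanSpace ℝ (Fin d))).Pairwise fun a b => ρ / 2 ≤ dist a b with hadm
  have hcpos : (0 : ℝ) < c₀ * (ρ / 4) ^ d := by positivity
  have cardb : ∀ t : Finset (EuclideanSpace ℝ (Fin d)), adm t →
      (t.card : ℝ) * (c₀ * (ρ / 4) ^ d) ≤ (volume Ω).toReal := by
    rintro t ⟨ht1, ht2⟩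
    have hdisj : (↑t : Set (EuclideanSpace ℝ (Fin d))).PairwiseDisjoint fun y => ball y (ρ / 4) ∩ Ω := by
      intro x hx y hy hxy
      have hs : ρ / 4 + ρ / 4 ≤ dist x y := by linarith [ht2 hx hy hxy]
      exact (ball_disjoint_ball hs).mono Set.inter_subset_left Set.inter_subset_left
    have h1 : (t.card : ℝ≥0∞) * ENNReal.ofReal (c₀ * (ρ / 4) ^ d) ≤ volume Ω := by
      calc (t.card : ℝ≥0∞) * ENNReal.ofReal (c₀ * (ρ / 4) ^ d)
          = ∑ _y ∈ t, ENNReal.ofReal (c₀ * (ρ / 4) ^ d) := by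
            rw [Finset.sum_const, nsmul_eq_mul]
        _ ≤ ∑ y ∈ t, volume (ball y (ρ / 4) ∩ Ω) :=
            Finset.sum_le_sum fun y hy => hvol y (ht1 hy)
        _ = volume (⋃ y ∈ t, ball y (ρ / 4) ∩ Ω) :=
            (measure_biUnion_finset hdisj fun y _ => measurableSet_ball.inter hΩm).symm
        _ ≤ volume Ω := measure_mono (Set.iUnion₂_subset fun y _ => Set.inter_subset_right)
    have h2 := ENNReal.toReal_mono hfin h1
    rw [ENNReal.toReal_mul, ENNReal.toReal_ofReal hcpos.le] at h2
    simpa using h2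
  set Scard : Set ℕ := {k | ∃ t : Finset (EuclideanSpace ℝ (Fin d)), adm t ∧ t.card = k} with hScard
  have hne : Scard.Nonempty := ⟨0, ∅, ⟨by simp, by simp⟩, rfl⟩
  have hbdd : BddAbove Scard := by
    refine ⟨Nat.ceil ((volume Ω).toReal / (c₀ * (ρ / 4) ^ d)), ?_⟩
    rintro k ⟨t, ht, rfl⟩
    have h1 := cardb t ht
    have h2 : (t.card : ℝ) ≤ (volume Ω).toReal / (c₀ * (ρ / 4) ^ d) :=
      (le_div_iff₀ hcpos).2 h1
    exact_mod_cast h2.trans (Nat.le_ceil _)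
  obtain ⟨t, ht, hcard⟩ := Nat.sSup_mem hne hbdd
  refine ⟨t, ht.1, ?_, cardb t ht⟩
  intro x hx
  by_contra hcon
  push_neg at hcon
  have hxt : x ∉ t := by
    intro hxt
    have := hcon x hxt
    simp only [dist_self] at this
    linarith
  have hadmi : adm (insert x t) := by
    constructor
    · rw [Finset.coe_insert]
      exact Set.insert_subset hx ht.1
    · rw [Finset.coe_insert]
      exact ht.2.insert fun b hb _ => ⟨hcon b hb, by rw [dist_comm]; exact hcon b hb⟩
  have hle : (insert x t).card ≤ sSup Scard := le_csSup hbdd ⟨insert x t, hadmi, rfl⟩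
  rw [Finset.card_insert_of_notMem hxt, hcard] at hle
  omega

/-- Random covering of a bounded open domain `Ω ⊂ ℝ^d` with Lipschitz boundary
(encoded via lower Ahlfors regularity of `Ω`): there is a constant `C > 0`,
depending only on `Ω` and `d`, such that whenever the radii satisfy
`n · q_min · r_n^d ≥ C log n`, almost surely `Ω ⊆ ⋃_{x ∈ X_n} B(x, r_n)` for all
sufficiently large `n`. -/
theorem random_covering (d : ℕ) (hd : 2 ≤ d)
    (Ω : Set (EuclideanSpace ℝ (Fin d))) (hΩopen : IsOpen Ω)
    (hΩbdd : Bornology.IsBounded Ω) (hΩne : Ω.Nonempty)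
    -- Lipschitz boundary: lower Ahlfors regularity of small balls centered in Ω
    (c₀ r₀ : ℝ) (hc₀ : 0 < c₀) (hr₀ : 0 < r₀)
    (hreg : ∀ x ∈ Ω, ∀ r : ℝ, 0 < r → r ≤ r₀ →
      ENNReal.ofReal (c₀ * r ^ d) ≤ volume (ball x r ∩ Ω)) :
    ∃ C : ℝ, 0 < C ∧
      ∀ (α : Type) (_ : MeasurableSpace α) (P : Measure α) (_ : IsProbabilityMeasure P)
        (q : EuclideanSpace ℝ (Fin d) → ℝ) (_ : Measurable q)
        (qmin : ℝ) (_ : 0 < qmin) (_ : ∀ x ∈ Ω, qmin ≤ q x)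
        (_ : ∀ x, x ∉ Ω → q x = 0)
        (ν : Measure (EuclideanSpace ℝ (Fin d))) (_ : IsProbabilityMeasure ν)
        (_ : ν = volume.withDensity fun x => ENNReal.ofReal (q x))
        (X : ℕ → α → EuclideanSpace ℝ (Fin d)) (_ : ∀ i, Measurable (X i))
        (_ : iIndepFun X P)
        (_ : ∀ i, Measure.map (X i) P = ν)
        (r : ℕ → ℝ) (_ : ∀ n, 0 < r n),
        (∀ n : ℕ, 1 ≤ n → C * Real.log n ≤ (n : ℝ) * qmin * r n ^ d) →
        ∀ᵐ ω ∂P, ∃ n₀ : ℕ, ∀ n ≥ n₀,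
          Ω ⊆ ⋃ i ∈ Finset.range n, ball (X i ω) (r n) := by
  classical
  have hC : (0:ℝ) < 3 * 2 ^ d / c₀ := by positivity
  refine ⟨3 * 2 ^ d / c₀, hC, ?_⟩
  intro α mα P hP q hq qmin hqmin hqle hq0 ν hν hνdef X hX hindep hmap r hr hradii
  set C : ℝ := 3 * 2 ^ d / c₀ with hCdef
  have hΩm : MeasurableSet Ω := hΩopen.measurableSet
  have hfin : volume Ω ≠ ⊤ := hΩbdd.measure_lt_top.ne
  set V : ℝ := (volume Ω).toReal with hV
  have hV0 : 0 ≤ V := ENNReal.toReal_nonneg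
  set ε₀ : ℝ := min 1 (2 * r₀) with hε₀
  have hε₀pos : 0 < ε₀ := lt_min one_pos (by linarith)
  have hε₀r₀ : ε₀ ≤ 2 * r₀ := min_le_right _ _
  set ρ : ℕ → ℝ := fun n => min (r n) ε₀ with hρdef
  have hρpos : ∀ n, 0 < ρ n := fun n => lt_min (hr n) hε₀pos
  have hρle : ∀ n, ρ n ≤ r n := fun n => min_le_left _ _
  have hρε : ∀ n, ρ n ≤ ε₀ := fun n => min_le_right _ _
  have hρ2 : ∀ n, ρ n / 2 ≤ r₀ := fun n => by have := hρε n; linarith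
  have hρ4 : ∀ n, ρ n / 4 ≤ r₀ := fun n => by have := hρε n; have := hρpos n; linarith
  set A : ℕ → Set α :=
    fun n => {ω | ¬ Ω ⊆ ⋃ i ∈ Finset.range n, ball (X i ω) (r n)} with hA
  -- lower bound on the ν-measure of small balls centered in Ω
  have hballLB : ∀ (n : ℕ) (y : EuclideanSpace ℝ (Fin d)), y ∈ Ω →
      ENNReal.ofReal (qmin * (c₀ * (ρ n / 2) ^ d)) ≤ ν (ball y (ρ n / 2)) := by
    intro n y hy
    have h1 : ENNReal.ofReal (c₀ * (ρ n / 2) ^ d) ≤ volume (ball y (ρ n / 2) ∩ Ω) :=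
      hreg y hy _ (by have := hρpos n; positivity) (hρ2 n)
    calc ENNReal.ofReal (qmin * (c₀ * (ρ n / 2) ^ d))
        = ENNReal.ofReal qmin * ENNReal.ofReal (c₀ * (ρ n / 2) ^ d) :=
          ENNReal.ofReal_mul hqmin.le
      _ ≤ ENNReal.ofReal qmin * volume (ball y (ρ n / 2) ∩ Ω) := by gcongr
      _ = ∫⁻ _x in ball y (ρ n / 2) ∩ Ω, ENNReal.ofReal qmin := by
          rw [setLIntegral_const, mul_comm]
      _ ≤ ∫⁻ x in ball y (ρ n / 2) ∩ Ω, ENNReal.ofReal (q x) := by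
          refine setLIntegral_mono (hq.ennreal_ofReal) fun x hx => ?_
          exact ENNReal.ofReal_le_ofReal (hqle x hx.2)
      _ ≤ ∫⁻ x in ball y (ρ n / 2), ENNReal.ofReal (q x) :=
          lintegral_mono_set Set.inter_subset_left
      _ = ν (ball y (ρ n / 2)) := by rw [hνdef, withDensity_apply _ measurableSet_ball]
  -- probability that a fixed ball contains no sample point
  have hEy : ∀ (n : ℕ) (y : EuclideanSpace ℝ (Fin d)), y ∈ Ω →
      P (⋂ i ∈ Finset.range n, X i ⁻¹' (ball y (ρ n / 2))ᶜ) ≤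
        ENNReal.ofReal (Real.exp (-(qmin * (c₀ * (ρ n / 2) ^ d)))) ^ n := by
    intro n y hy
    have hprod := hindep.measure_inter_preimage_eq_mul (Finset.range n)
      (sets := fun _ => (ball y (ρ n / 2))ᶜ) (fun i _ => measurableSet_ball.compl)
    have hfac : ∀ i : ℕ, P (X i ⁻¹' (ball y (ρ n / 2))ᶜ) = 1 - ν (ball y (ρ n / 2)) := by
      intro i
      rw [← Measure.map_apply (hX i) measurableSet_ball.compl, hmap i,
        prob_compl_eq_one_sub measurableSet_ball]
    have hone : (1 : ℝ≥0∞) - ν (ball y (ρ n / 2)) ≤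
        ENNReal.ofReal (Real.exp (-(qmin * (c₀ * (ρ n / 2) ^ d)))) := by
      have h1 : (1 : ℝ≥0∞) - ν (ball y (ρ n / 2)) ≤
          1 - ENNReal.ofReal (qmin * (c₀ * (ρ n / 2) ^ d)) :=
        tsub_le_tsub_left (hballLB n y hy) 1
      have h2 : (1 : ℝ≥0∞) - ENNReal.ofReal (qmin * (c₀ * (ρ n / 2) ^ d)) =
          ENNReal.ofReal (1 - qmin * (c₀ * (ρ n / 2) ^ d)) := by
        rw [ENNReal.ofReal_sub _ (by have := hρpos n; positivity), ENNReal.ofReal_one]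
      have h3 : (1 : ℝ) - qmin * (c₀ * (ρ n / 2) ^ d) ≤
          Real.exp (-(qmin * (c₀ * (ρ n / 2) ^ d))) := by
        linarith [Real.add_one_le_exp (-(qmin * (c₀ * (ρ n / 2) ^ d)))]
      exact h1.trans (h2.le.trans (ENNReal.ofReal_le_ofReal h3))
    calc P (⋂ i ∈ Finset.range n, X i ⁻¹' (ball y (ρ n / 2))ᶜ)
        = ∏ i ∈ Finset.range n, P (X i ⁻¹' (ball y (ρ n / 2))ᶜ) := hprod
      _ = (1 - ν (ball y (ρ n / 2))) ^ n := by
          rw [Finset.prod_congr rfl fun i _ => hfac i, Finset.prod_const, Finset.card_range]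
      _ ≤ ENNReal.ofReal (Real.exp (-(qmin * (c₀ * (ρ n / 2) ^ d)))) ^ n := by gcongr
  -- key per-n bound
  have key : ∀ n : ℕ, P (A n) ≤
      ENNReal.ofReal ((V / (c₀ * (ρ n / 4) ^ d)) *
        Real.exp (-(n : ℝ) * (qmin * (c₀ * (ρ n / 2) ^ d)))) := by
    intro n
    obtain ⟨T, hTsub, hTcov, hTcard⟩ := exists_net_rc d Ω hΩm hfin c₀ (ρ n) hc₀ (hρpos n)
      (fun x hx => hreg x hx _ (by have := hρpos n; positivity) (hρ4 n))
    have hcpos : (0:ℝ) < c₀ * (ρ n / 4) ^ d := by have := hρpos n; positivity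
    have hsub : A n ⊆ ⋃ y ∈ T, ⋂ i ∈ Finset.range n, X i ⁻¹' (ball y (ρ n / 2))ᶜ := by
      intro ω hω
      by_contra hcon
      simp only [Set.mem_iUnion, Set.mem_iInter, Set.mem_preimage, Set.mem_compl_iff] at hcon
      push_neg at hcon
      apply hω
      intro x hx
      obtain ⟨y, hyT, hxy⟩ := hTcov x hx
      obtain ⟨i, hi, hiball⟩ := hcon y hyT
      refine Set.mem_biUnion hi ?_
      have h1 : dist (X i ω) y < ρ n / 2 := mem_ball.1 hiball
      have h2 : dist x (X i ω) < r n := by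
        have := dist_triangle x y (X i ω)
        have := hρle n
        rw [dist_comm (X i ω) y] at h1
        linarith
      exact mem_ball.2 h2
    have hcard : (T.card : ℝ≥0∞) ≤ ENNReal.ofReal (V / (c₀ * (ρ n / 4) ^ d)) := by
      have h2 : (T.card : ℝ) ≤ V / (c₀ * (ρ n / 4) ^ d) := (le_div_iff₀ hcpos).2 hTcard
      calc (T.card : ℝ≥0∞) = ENNReal.ofReal (T.card : ℝ) := by
            rw [ENNReal.ofReal_natCast]
        _ ≤ _ := ENNReal.ofReal_le_ofReal h2
    calc P (A n) ≤ P (⋃ y ∈ T, ⋂ i ∈ Finset.range n, X i ⁻¹' (ball y (ρ n / 2))ᶜ) :=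
          measure_mono hsub
      _ ≤ ∑ y ∈ T, P (⋂ i ∈ Finset.range n, X i ⁻¹' (ball y (ρ n / 2))ᶜ) :=
          measure_biUnion_finset_le _ _
      _ ≤ ∑ _y ∈ T, ENNReal.ofReal (Real.exp (-(qmin * (c₀ * (ρ n / 2) ^ d)))) ^ n :=
          Finset.sum_le_sum fun y hy => hEy n y (hTsub hy)
      _ = (T.card : ℝ≥0∞) * ENNReal.ofReal (Real.exp (-(qmin * (c₀ * (ρ n / 2) ^ d)))) ^ n := by
          rw [Finset.sum_const, nsmul_eq_mul]
      _ ≤ ENNReal.ofReal (V / (c₀ * (ρ n / 4) ^ d)) *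
            ENNReal.ofReal (Real.exp (-(qmin * (c₀ * (ρ n / 2) ^ d)))) ^ n :=
          mul_le_mul_left hcard _
      _ = ENNReal.ofReal ((V / (c₀ * (ρ n / 4) ^ d)) *
            Real.exp (-(n : ℝ) * (qmin * (c₀ * (ρ n / 2) ^ d)))) := by
          rw [← ENNReal.ofReal_pow (Real.exp_nonneg _), ← Real.exp_nat_mul,
            ← ENNReal.ofReal_mul (div_nonneg hV0 hcpos.le)]
          congr 2
          ring_nf
  -- comparison series
  set a : ℝ := qmin * (c₀ * (ε₀ / 2) ^ d) with ha
  have hapos : 0 < a := by positivity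
  set K₁ : ℝ := V / c₀ * 4 ^ d * (2 * qmin / C) with hK₁
  set K₂ : ℝ := V / (c₀ * (ε₀ / 4) ^ d) with hK₂
  have hK₁0 : 0 ≤ K₁ := by
    apply mul_nonneg (mul_nonneg (div_nonneg hV0 hc₀.le) (by positivity))
    positivity
  have hK₂0 : 0 ≤ K₂ := div_nonneg hV0 (by positivity)
  set H : ℕ → ℝ :=
    fun n => K₁ * ((n : ℝ) ^ 2)⁻¹ + K₂ * Real.exp (-a) ^ n + (if n < 2 then 1 else 0) with hH
  have hHnonneg : ∀ n, 0 ≤ H n := by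
    intro n
    have h1 : (0:ℝ) ≤ K₁ * ((n : ℝ) ^ 2)⁻¹ := mul_nonneg hK₁0 (by positivity)
    have h2 : (0:ℝ) ≤ K₂ * Real.exp (-a) ^ n :=
      mul_nonneg hK₂0 (pow_nonneg (Real.exp_nonneg _) n)
    have h3 : (0:ℝ) ≤ (if n < 2 then (1:ℝ) else 0) := by positivity
    simp only [hH]
    linarith
  have hHbound : ∀ n, P (A n) ≤ ENNReal.ofReal (H n) := by
    intro n
    rcases lt_or_ge n 2 with hn2 | hn2
    · -- small n : use that P is a probability measure
      have h1 : P (A n) ≤ 1 := prob_le_one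
      refine h1.trans ?_
      rw [ENNReal.one_le_ofReal]
      have h1' : (0:ℝ) ≤ K₁ * ((n : ℝ) ^ 2)⁻¹ := mul_nonneg hK₁0 (by positivity)
      have h2' : (0:ℝ) ≤ K₂ * Real.exp (-a) ^ n :=
        mul_nonneg hK₂0 (pow_nonneg (Real.exp_nonneg _) n)
      simp only [hH, if_pos hn2]
      linarith
    · refine (key n).trans (ENNReal.ofReal_le_ofReal ?_)
      have hn0 : (0:ℝ) < n := by positivity
      have hn1 : (2:ℝ) ≤ n := by exact_mod_cast hn2
      rcases le_total (r n) ε₀ with hcase | hcase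
      · -- small radius: ρ n = r n
        have hρn : ρ n = r n := min_eq_left hcase
        have hlog : (1:ℝ)/2 ≤ Real.log n := by
          have h2 : Real.log 2 ≤ Real.log n := Real.log_le_log (by norm_num) hn1
          have := Real.log_two_gt_d9
          linarith
        have hrad := hradii n (by omega)
        have hrn := hr n
        have hpow : (0:ℝ) < r n ^ d := by positivity
        -- exponential bound
        have hnp : 3 * Real.log n ≤ (n : ℝ) * (qmin * (c₀ * (r n / 2) ^ d)) := by
          have hm : (c₀ / 2 ^ d) * (C * Real.log n) ≤
              (c₀ / 2 ^ d) * ((n : ℝ) * qmin * r n ^ d) := by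
            apply mul_le_mul_of_nonneg_left hrad (by positivity)
          have he1 : (c₀ / 2 ^ d) * (C * Real.log n) = 3 * Real.log n := by
            rw [hCdef]; field_simp
          have he2 : (c₀ / 2 ^ d) * ((n : ℝ) * qmin * r n ^ d) =
              (n : ℝ) * (qmin * (c₀ * (r n / 2) ^ d)) := by
            rw [div_pow]; field_simp
          rw [he1, he2] at hm
          exact hm
        have hexp : Real.exp (-(n:ℝ) * (qmin * (c₀ * (r n / 2) ^ d))) ≤ ((n:ℝ) ^ 3)⁻¹ := by
          have h1 : Real.exp (-(n:ℝ) * (qmin * (c₀ * (r n / 2) ^ d))) ≤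
              Real.exp (-(3 * Real.log n)) := Real.exp_le_exp.2 (by linarith)
          have h2 : Real.exp (-(3 * Real.log n)) = ((n:ℝ) ^ 3)⁻¹ := by
            rw [show -(3 * Real.log n) = Real.log (((n:ℝ) ^ 3)⁻¹) by
              rw [Real.log_inv, Real.log_pow]; push_cast; ring]
            exact Real.exp_log (by positivity)
          linarith
        -- prefactor bound
        have h4 : C / 2 ≤ (n : ℝ) * qmin * r n ^ d := by
          have := mul_le_mul_of_nonneg_left hlog hC.le
          linarith
        have h5 : (r n ^ d)⁻¹ ≤ 2 * (n : ℝ) * qmin / C := by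
          have h6 : C / (2 * (n : ℝ) * qmin) ≤ r n ^ d := by
            rw [div_le_iff₀ (by positivity)]
            nlinarith
          calc (r n ^ d)⁻¹ ≤ (C / (2 * (n : ℝ) * qmin))⁻¹ := by
                apply inv_anti₀ (by positivity) h6
            _ = 2 * (n : ℝ) * qmin / C := by rw [inv_div]
        have e1 : V / (c₀ * (r n / 4) ^ d) = (V / c₀ * 4 ^ d) * (r n ^ d)⁻¹ := by
          rw [div_pow]
          field_simp
        have hprefnn : (0:ℝ) ≤ V / c₀ * 4 ^ d :=
          mul_nonneg (div_nonneg hV0 hc₀.le) (by positivity)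
        have hfull : V / (c₀ * (r n / 4) ^ d) *
            Real.exp (-(n : ℝ) * (qmin * (c₀ * (r n / 2) ^ d))) ≤ K₁ * ((n : ℝ) ^ 2)⁻¹ := by
          calc V / (c₀ * (r n / 4) ^ d) *
              Real.exp (-(n : ℝ) * (qmin * (c₀ * (r n / 2) ^ d)))
              ≤ (V / c₀ * 4 ^ d) * (2 * (n : ℝ) * qmin / C) * ((n : ℝ) ^ 3)⁻¹ := by
                rw [e1]
                refine mul_le_mul ?_ hexp (Real.exp_nonneg _) ?_
                · exact mul_le_mul_of_nonneg_left h5 hprefnn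
                · exact mul_nonneg hprefnn (by positivity)
            _ = K₁ * ((n : ℝ) * ((n : ℝ) ^ 3)⁻¹) := by rw [hK₁]; ring
            _ = K₁ * ((n : ℝ) ^ 2)⁻¹ := by
                congr 1
                rw [eq_comm, inv_eq_iff_eq_inv, eq_comm, inv_eq_iff_eq_inv]
                field_simp
        rw [hρn]
        have h2' : (0:ℝ) ≤ K₂ * Real.exp (-a) ^ n :=
          mul_nonneg hK₂0 (pow_nonneg (Real.exp_nonneg _) n)
        have h3' : (0:ℝ) ≤ (if n < 2 then (1:ℝ) else 0) := by positivity
        simp only [hH]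
        linarith
      · -- large radius: ρ n = ε₀
        have hρn : ρ n = ε₀ := min_eq_right hcase
        rw [hρn]
        have hterm : V / (c₀ * (ε₀ / 4) ^ d) *
            Real.exp (-(n : ℝ) * (qmin * (c₀ * (ε₀ / 2) ^ d))) = K₂ * Real.exp (-a) ^ n := by
          rw [hK₂, ha, ← Real.exp_nat_mul]
          congr 2
          ring
        rw [hterm]
        have h1' : (0:ℝ) ≤ K₁ * ((n : ℝ) ^ 2)⁻¹ := mul_nonneg hK₁0 (by positivity)
        have h3' : (0:ℝ) ≤ (if n < 2 then (1:ℝ) else 0) := by positivity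
        simp only [hH]
        linarith
  -- summability of the comparison series
  have hHsummable : Summable H := by
    have S1 : Summable fun n : ℕ => K₁ * ((n : ℝ) ^ 2)⁻¹ := by
      have := (Real.summable_one_div_nat_pow (p := 2)).2 one_lt_two
      simpa [one_div] using this.mul_left K₁
    have S2 : Summable fun n : ℕ => K₂ * Real.exp (-a) ^ n :=
      (summable_geometric_of_lt_one (Real.exp_nonneg _)
        (Real.exp_lt_one_iff.2 (by linarith))).mul_left K₂
    have S3 : Summable fun n : ℕ => (if n < 2 then (1:ℝ) else 0) := by
      apply summable_of_ne_finset_zero (s := Finset.range 2)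
      intro n hn
      simp only [Finset.mem_range, not_lt] at hn
      simp [Nat.lt_irrefl, show ¬ n < 2 by omega]
    exact (S1.add S2).add S3
  -- Borel–Cantelli
  have hsum : (∑' n, P (A n)) ≠ ⊤ := by
    have h1 : (∑' n, P (A n)) ≤ ∑' n, ENNReal.ofReal (H n) := ENNReal.tsum_le_tsum hHbound
    rw [← ENNReal.ofReal_tsum_of_nonneg hHnonneg hHsummable] at h1
    exact (h1.trans_lt ENNReal.ofReal_lt_top).ne
  filter_upwards [ae_eventually_notMem hsum] with ω hω
  rw [eventually_atTop] at hω
  obtain ⟨n₀, hn₀⟩ := hω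
  refine ⟨n₀, fun n hn => ?_⟩
  have := hn₀ n hn
  simpa [hA] using this
end
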